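/- Let f ∈ K̄[x_0, …, x_n] be homogeneous of degree D and let g_0, …, g_n ∈ K̄[x_0, …, x_m] be homogeneous polynomials of equal degree. Then the composite polynomial f(g_0, …, g_n) satisfies h_1(f(g_0, …, g_n)) ≤ h_1(f) + D·h_1(g_0, …, g_n). -/

import Mathlib

/-- A family of normalized absolute values on a field `K` (modelling the places of a
number field): each absolute value is either archimedean, i.e. of the form
`|σ(·)|^{w_v}` for a complex embedding `σ` and a weight `w_v`, or non-archimedean
(ultrametric); only finitely many places are archimedean; for each nonzero `x` only
finitely many absolute values differ from `1`, and the product formula holds. -/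
structure AbsValueFamily (K : Type*) [Field K] where
  V : Type
  A : V → AbsoluteValue K ℝ
  arch : V → Prop
  archFinite : {v | arch v}.Finite
  w : V → ℝ
  wpos : ∀ v, arch v → 0 < w v
  emb : (v : V) → arch v → (K →+* ℂ)
  hemb : ∀ (v : V) (h : arch v) (x : K), A v x = ‖emb v h x‖ ^ w v
  nonarch : ∀ v : V, ¬ arch v → ∀ x y : K, A v (x + y) ≤ max (A v x) (A v y)
  finiteSupport : ∀ x : K, x ≠ 0 → (Function.mulSupport fun v => A v x).Finite
  product_formula : ∀ x : K, x ≠ 0 → ∏ᶠ v, A v x = 1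

variable {K : Type*} [Field K]

/-- The sup-norm `‖c‖_v = max_i |c_i|_v` of a vector of elements of `K` at a place `v`. -/
noncomputable def AbsValueFamily.normSup (P : AbsValueFamily K) {ι : Type*}
    (c : ι → K) (v : P.V) : ℝ := ⨆ i, P.A v (c i)

open Classical in
/-- The norm `‖c‖_{v,1}`: the (weighted) `L¹`-norm of the coefficient vector at an
archimedean place, and the sup-norm at a non-archimedean place. -/
noncomputable def AbsValueFamily.norm1 (P : AbsValueFamily K) {ι : Type*}
    (c : ι → K) (v : P.V) : ℝ :=
  if h : P.arch v then (∑ᶠ i, ‖P.emb v h (c i)‖) ^ P.w v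
  else ⨆ i, P.A v (c i)

/-- The logarithmic height `h(c) = log ∏_v max_i |c_i|_v`. -/
noncomputable def AbsValueFamily.hgt (P : AbsValueFamily K) {ι : Type*} (c : ι → K) : ℝ :=
  Real.log (∏ᶠ v, P.normSup c v)

/-- The logarithmic height `h₁(c) = log ∏_v ‖c‖_{v,1}`. -/
noncomputable def AbsValueFamily.hgt1 (P : AbsValueFamily K) {ι : Type*} (c : ι → K) : ℝ :=
  Real.log (∏ᶠ v, P.norm1 c v)


open Function

lemma bddAbove_range_of_finite_support {α : Type*} {f : α → ℝ}
    (h : (Function.support f).Finite) : BddAbove (Set.range f) := by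
  have hsub : Set.range f ⊆ insert 0 (f '' Function.support f) := by
    rintro _ ⟨a, rfl⟩
    by_cases ha : f a = 0
    · simp [ha]
    · exact Set.mem_insert_of_mem _ ⟨a, ha, rfl⟩
  exact (((h.image f).insert 0).bddAbove).mono hsub

lemma finprod_le_finprod_of_le {α : Type*} {a b : α → ℝ}
    (h0 : ∀ v, 0 ≤ a v) (hab : ∀ v, a v ≤ b v)
    (hfa : (mulSupport a).Finite) (hfb : (mulSupport b).Finite) :
    ∏ᶠ v, a v ≤ ∏ᶠ v, b v := by
  classical
  set s : Finset α := (hfa.union hfb).toFinset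
  rw [finprod_eq_prod_of_mulSupport_subset a (s := s) (by simp [s]),
    finprod_eq_prod_of_mulSupport_subset b (s := s) (by simp [s])]
  exact Finset.prod_le_prod (fun v _ => h0 v) (fun v _ => hab v)

namespace AbsValueFamily

variable (P : AbsValueFamily K) {ι : Type*}

lemma norm1_nonneg (c : ι → K) (v : P.V) : 0 ≤ P.norm1 c v := by
  rw [norm1]
  split_ifs with h
  · exact Real.rpow_nonneg (finsum_nonneg fun i => norm_nonneg _) _
  · exact Real.iSup_nonneg fun i => (P.A v).nonneg _

lemma support_abs_emb_subset (c : ι → K) (v : P.V) (h : P.arch v) :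
    (support fun i => ‖P.emb v h (c i)‖) ⊆ support c := by
  intro j hj
  simp only [mem_support] at hj ⊢
  intro hcj
  apply hj
  rw [hcj, map_zero, norm_zero]

lemma support_A_subset (c : ι → K) (v : P.V) :
    (support fun i => P.A v (c i)) ⊆ support c := by
  intro j hj
  simp only [mem_support] at hj ⊢
  intro hcj
  apply hj
  rw [hcj, map_zero]

lemma le_norm1 (c : ι → K) (hc : (support c).Finite) (v : P.V) (i : ι) :
    P.A v (c i) ≤ P.norm1 c v := by
  rw [norm1]
  split_ifs with h
  · rw [P.hemb v h]
    refine Real.rpow_le_rpow (norm_nonneg _) ?_ (le_of_lt (P.wpos v h))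
    exact single_le_finsum i (hc.subset (P.support_abs_emb_subset c v h))
      (fun j => norm_nonneg _)
  · exact le_ciSup (bddAbove_range_of_finite_support (hc.subset (P.support_A_subset c v))) i

lemma mulSupport_norm1_finite (c : ι → K) (hc : (support c).Finite) (i₀ : ι)
    (hi₀ : c i₀ ≠ 0) : (mulSupport fun v => P.norm1 c v).Finite := by
  have hB : ({v | P.arch v} ∪ ⋃ i ∈ support c, mulSupport fun v => P.A v (c i)).Finite :=
    P.archFinite.union (hc.biUnion fun i hi => P.finiteSupport _ hi)
  apply hB.subset
  intro v hv
  by_contra hvB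
  have harch : ¬ P.arch v := fun h => hvB (Or.inl h)
  have hA' : ∀ i, c i ≠ 0 → P.A v (c i) = 1 := by
    intro i hi
    by_contra hne
    exact hvB (Or.inr (Set.mem_biUnion (mem_support.mpr hi) hne))
  apply hv
  show P.norm1 c v = 1
  rw [norm1, dif_neg harch]
  apply le_antisymm
  · apply Real.iSup_le _ zero_le_one
    intro i
    by_cases hci : c i = 0
    · simp [hci]
    · rw [hA' i hci]
  · have := le_ciSup (bddAbove_range_of_finite_support
      (hc.subset (P.support_A_subset c v))) i₀
    rwa [hA' i₀ hi₀] at this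

lemma one_le_finprod_norm1 (c : ι → K) (hc : (support c).Finite) (i₀ : ι)
    (hi₀ : c i₀ ≠ 0) : 1 ≤ ∏ᶠ v, P.norm1 c v := by
  rw [← P.product_formula (c i₀) hi₀]
  exact finprod_le_finprod_of_le (fun v => (P.A v).nonneg _)
    (fun v => P.le_norm1 c hc v i₀) (P.finiteSupport _ hi₀)
    (P.mulSupport_norm1_finite c hc i₀ hi₀)

lemma hgt1_of_zero [Nonempty ι] (c : ι → K) (hc0 : ∀ i, c i = 0) : P.hgt1 c = 0 := by
  have hz : ∀ v, P.norm1 c v = 0 := by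
    intro v
    rw [norm1]
    split_ifs with h
    · rw [show (∑ᶠ i, ‖P.emb v h (c i)‖) = (0:ℝ) by simp [hc0],
        Real.zero_rpow (ne_of_gt (P.wpos v h))]
    · simp [hc0]
  rw [hgt1]
  by_cases hfin : (mulSupport fun v => P.norm1 c v).Finite
  · rcases isEmpty_or_nonempty P.V with hV | hV
    · rw [finprod_of_isEmpty, Real.log_one]
    · obtain ⟨v⟩ := hV
      rw [finprod_eq_zero _ v (hz v) hfin, Real.log_zero]
  · rw [finprod_of_infinite_mulSupport hfin, Real.log_one]

lemma hgt1_nonneg [Nonempty ι] (c : ι → K) (hc : (support c).Finite) : 0 ≤ P.hgt1 c := by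
  by_cases h : ∀ i, c i = 0
  · rw [P.hgt1_of_zero c h]
  · push_neg at h
    obtain ⟨i₀, hi₀⟩ := h
    rw [hgt1, show (0:ℝ) = Real.log 1 by simp]
    exact Real.log_le_log one_pos (P.one_le_finprod_norm1 c hc i₀ hi₀)

end AbsValueFamily

section Cnorm

open MvPolynomial

variable {σ : Type*}

noncomputable def cnorm1 (p : MvPolynomial σ ℂ) : ℝ :=
  ∑ μ ∈ p.support, ‖MvPolynomial.coeff μ p‖

lemma cnorm1_nonneg (p : MvPolynomial σ ℂ) : 0 ≤ cnorm1 p :=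
  Finset.sum_nonneg fun _ _ => norm_nonneg _

lemma cnorm1_eq_sum_subset {p : MvPolynomial σ ℂ} {s : Finset (σ →₀ ℕ)}
    (h : p.support ⊆ s) : cnorm1 p = ∑ μ ∈ s, ‖coeff μ p‖ :=
  Finset.sum_subset h fun μ _ hμ => by
    rw [notMem_support_iff.mp hμ]; simp

lemma cnorm1_zero : cnorm1 (0 : MvPolynomial σ ℂ) = 0 := by simp [cnorm1]

lemma cnorm1_add_le (p q : MvPolynomial σ ℂ) : cnorm1 (p + q) ≤ cnorm1 p + cnorm1 q := by
  classical
  set s := (p.support ∪ q.support) ∪ (p + q).support with hs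
  rw [cnorm1_eq_sum_subset (p := p + q) (s := s) (by intro x hx; simp [hs, hx]),
    cnorm1_eq_sum_subset (p := p) (s := s) (by intro x hx; simp [hs, hx]),
    cnorm1_eq_sum_subset (p := q) (s := s) (by intro x hx; simp [hs, hx]),
    ← Finset.sum_add_distrib]
  refine Finset.sum_le_sum fun μ _ => ?_
  rw [coeff_add]
  exact norm_add_le _ _

lemma cnorm1_sum_le {β : Type*} (s : Finset β) (h : β → MvPolynomial σ ℂ) :
    cnorm1 (∑ i ∈ s, h i) ≤ ∑ i ∈ s, cnorm1 (h i) := by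
  classical
  induction s using Finset.induction with
  | empty => simp [cnorm1_zero]
  | insert _ _ hx ih =>
    rw [Finset.sum_insert hx, Finset.sum_insert hx]
    exact le_trans (cnorm1_add_le _ _) (by linarith)

lemma cnorm1_monomial_le (d : σ →₀ ℕ) (c : ℂ) :
    cnorm1 (monomial d c) ≤ ‖c‖ := by
  classical
  by_cases hc : c = 0
  · simp [hc, cnorm1_zero]
  · rw [cnorm1, support_monomial, if_neg hc, Finset.sum_singleton, coeff_monomial, if_pos rfl]

lemma cnorm1_mul_le (p q : MvPolynomial σ ℂ) : cnorm1 (p * q) ≤ cnorm1 p * cnorm1 q := by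
  classical
  have hpq : p * q = ∑ a ∈ p.support, ∑ b ∈ q.support,
      monomial (a + b) (coeff a p * coeff b q) := by
    conv_lhs => rw [← support_sum_monomial_coeff p, ← support_sum_monomial_coeff q]
    rw [Finset.sum_mul_sum]
    simp [monomial_mul]
  calc cnorm1 (p * q)
      ≤ ∑ a ∈ p.support, cnorm1 (∑ b ∈ q.support, monomial (a + b) (coeff a p * coeff b q)) := by
        rw [hpq]; exact cnorm1_sum_le _ _
    _ ≤ ∑ a ∈ p.support, ∑ b ∈ q.support, ‖coeff a p‖ * ‖coeff b q‖ := by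
        refine Finset.sum_le_sum fun a _ => ?_
        refine le_trans (cnorm1_sum_le _ _) (Finset.sum_le_sum fun b _ => ?_)
        refine le_trans (cnorm1_monomial_le _ _) ?_
        rw [norm_mul]
    _ = cnorm1 p * cnorm1 q := by rw [cnorm1, cnorm1, Finset.sum_mul_sum]

lemma cnorm1_one_le : cnorm1 (1 : MvPolynomial σ ℂ) ≤ 1 := by
  have h := cnorm1_monomial_le (0 : σ →₀ ℕ) (1 : ℂ)
  rw [MvPolynomial.monomial_zero', map_one, norm_one] at h
  exact h

lemma cnorm1_pow_le (p : MvPolynomial σ ℂ) (k : ℕ) : cnorm1 (p ^ k) ≤ cnorm1 p ^ k := by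
  induction k with
  | zero => rw [pow_zero, pow_zero]; exact cnorm1_one_le
  | succ k ih =>
    rw [pow_succ, pow_succ]
    exact le_trans (cnorm1_mul_le _ _)
      (mul_le_mul ih le_rfl (cnorm1_nonneg _) (pow_nonneg (cnorm1_nonneg _) _))

lemma cnorm1_prod_le {β : Type*} (s : Finset β) (h : β → MvPolynomial σ ℂ) :
    cnorm1 (∏ i ∈ s, h i) ≤ ∏ i ∈ s, cnorm1 (h i) := by
  classical
  induction s using Finset.induction with
  | empty => rw [Finset.prod_empty, Finset.prod_empty]; exact cnorm1_one_le
  | insert _ _ hx ih =>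
    rw [Finset.prod_insert hx, Finset.prod_insert hx]
    exact le_trans (cnorm1_mul_le _ _)
      (mul_le_mul le_rfl ih (cnorm1_nonneg _) (cnorm1_nonneg _))

lemma cnorm1_C_le (c : ℂ) : cnorm1 (C c : MvPolynomial σ ℂ) ≤ ‖c‖ := by
  rw [C_apply]; exact cnorm1_monomial_le _ _

end Cnorm

section Gauss

open MvPolynomial

variable {σ : Type*} (A : AbsoluteValue K ℝ)

lemma absval_sum_le {β : Type*} (hna : ∀ x y : K, A (x + y) ≤ max (A x) (A y))
    (s : Finset β) (x : β → K) {B : ℝ} (hB : 0 ≤ B) (h : ∀ i ∈ s, A (x i) ≤ B) :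
    A (∑ i ∈ s, x i) ≤ B := by
  classical
  induction s using Finset.induction with
  | empty => simpa using hB
  | @insert a s' hx ih =>
    rw [Finset.sum_insert hx]
    refine le_trans (hna _ _) (max_le (h a (Finset.mem_insert_self _ _))
      (ih fun i hi => h i (Finset.mem_insert_of_mem hi)))

noncomputable def gaussSup (p : MvPolynomial σ K) : ℝ := ⨆ μ, A (coeff μ p)

lemma support_gauss_finite (p : MvPolynomial σ K) :
    (Function.support fun μ => A (coeff μ p)).Finite := by
  apply p.support.finite_toSet.subset
  intro μ hμ
  simp only [Function.mem_support] at hμ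
  rw [Finset.mem_coe, mem_support_iff]
  intro h0
  apply hμ
  rw [h0, map_zero]

lemma gaussSup_bdd (p : MvPolynomial σ K) : BddAbove (Set.range fun μ => A (coeff μ p)) :=
  bddAbove_range_of_finite_support (support_gauss_finite A p)

lemma gaussSup_nonneg (p : MvPolynomial σ K) : 0 ≤ gaussSup A p :=
  Real.iSup_nonneg fun _ => A.nonneg _

lemma le_gaussSup (p : MvPolynomial σ K) (μ : σ →₀ ℕ) : A (coeff μ p) ≤ gaussSup A p :=
  le_ciSup (gaussSup_bdd A p) μ

lemma gaussSup_le {p : MvPolynomial σ K} {B : ℝ} (hB : 0 ≤ B)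
    (h : ∀ μ, A (coeff μ p) ≤ B) : gaussSup A p ≤ B :=
  Real.iSup_le h hB

lemma gaussSup_mul_le (hna : ∀ x y : K, A (x + y) ≤ max (A x) (A y))
    (p q : MvPolynomial σ K) : gaussSup A (p * q) ≤ gaussSup A p * gaussSup A q := by
  classical
  refine gaussSup_le A (mul_nonneg (gaussSup_nonneg A p) (gaussSup_nonneg A q)) fun μ => ?_
  rw [coeff_mul]
  refine absval_sum_le A hna _ _ (mul_nonneg (gaussSup_nonneg A p) (gaussSup_nonneg A q))
    fun x _ => ?_
  rw [map_mul]
  exact mul_le_mul (le_gaussSup A p _) (le_gaussSup A q _) (A.nonneg _) (gaussSup_nonneg A p)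

lemma gaussSup_one_le : gaussSup A (1 : MvPolynomial σ K) ≤ 1 := by
  classical
  refine gaussSup_le A zero_le_one fun μ => ?_
  rw [coeff_one]
  split_ifs with h <;> simp

lemma gaussSup_pow_le (hna : ∀ x y : K, A (x + y) ≤ max (A x) (A y))
    (p : MvPolynomial σ K) (k : ℕ) : gaussSup A (p ^ k) ≤ gaussSup A p ^ k := by
  induction k with
  | zero => rw [pow_zero, pow_zero]; exact gaussSup_one_le A
  | succ k ih =>
    rw [pow_succ, pow_succ]
    exact le_trans (gaussSup_mul_le A hna _ _)
      (mul_le_mul ih le_rfl (gaussSup_nonneg A _) (pow_nonneg (gaussSup_nonneg A _) _))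

lemma gaussSup_prod_le (hna : ∀ x y : K, A (x + y) ≤ max (A x) (A y))
    {β : Type*} (s : Finset β) (h : β → MvPolynomial σ K) :
    gaussSup A (∏ i ∈ s, h i) ≤ ∏ i ∈ s, gaussSup A (h i) := by
  classical
  induction s using Finset.induction with
  | empty => rw [Finset.prod_empty, Finset.prod_empty]; exact gaussSup_one_le A
  | insert _ _ hx ih =>
    rw [Finset.prod_insert hx, Finset.prod_insert hx]
    exact le_trans (gaussSup_mul_le A hna _ _)
      (mul_le_mul le_rfl ih (gaussSup_nonneg A _) (gaussSup_nonneg A _))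

lemma gaussSup_C_le (c : K) : gaussSup A (C c : MvPolynomial σ K) ≤ A c := by
  classical
  refine gaussSup_le A (A.nonneg _) fun μ => ?_
  rw [coeff_C]
  split_ifs with h <;> simp [A.nonneg c]

end Gauss

section PerPlace

open MvPolynomial

lemma aeval_expand {n m : ℕ} (f : MvPolynomial (Fin (n + 1)) K)
    (g : Fin (n + 1) → MvPolynomial (Fin (m + 1)) K) :
    MvPolynomial.aeval g f =
      ∑ d ∈ f.support, MvPolynomial.C (coeff d f) * ∏ i : Fin (n + 1), g i ^ d i := by
  rw [MvPolynomial.aeval_def, MvPolynomial.eval₂_eq]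
  refine Finset.sum_congr rfl fun d _ => ?_
  rw [MvPolynomial.algebraMap_eq]
  congr 1
  refine Finset.prod_subset (Finset.subset_univ d.support) fun i _ hi => ?_
  rw [Finsupp.notMem_support_iff.mp hi, pow_zero]

lemma degree_univ_eq {n D : ℕ} {f : MvPolynomial (Fin (n + 1)) K} (hf : f.IsHomogeneous D)
    {d : Fin (n + 1) →₀ ℕ} (hd : coeff d f ≠ 0) : ∑ i : Fin (n + 1), d i = D := by
  have h1 : ∑ i ∈ d.support, d i = D := by
    simpa [Finsupp.weight, Finsupp.degree, Finsupp.linearCombination, Finsupp.sum] using hf hd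
  rw [← h1]
  exact (Finset.sum_subset (Finset.subset_univ _) fun i _ hi =>
    Finsupp.notMem_support_iff.mp hi).symm

lemma finsum_abs_eq_cnorm1 {τ : Type*} (φ : K →+* ℂ) (p : MvPolynomial τ K) :
    ∑ᶠ μ, ‖φ (coeff μ p)‖ = cnorm1 (MvPolynomial.map φ p) := by
  rw [cnorm1, finsum_eq_finset_sum_of_support_subset _ (s := (MvPolynomial.map φ p).support)]
  · exact Finset.sum_congr rfl fun μ _ => by rw [coeff_map]
  · intro μ hμ
    simp only [Function.mem_support] at hμ
    rw [Finset.mem_coe, mem_support_iff, coeff_map]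
    intro h0
    exact hμ (by rw [h0, norm_zero])

lemma arch_bound {n m D : ℕ} (φ : K →+* ℂ) (f : MvPolynomial (Fin (n + 1)) K)
    (hf : f.IsHomogeneous D) (g : Fin (n + 1) → MvPolynomial (Fin (m + 1)) K) :
    (∑ᶠ μ, ‖φ (coeff μ (MvPolynomial.aeval g f))‖) ≤
      (∑ᶠ d, ‖φ (coeff d f)‖) *
        (∑ᶠ p : Fin (n + 1) × (Fin (m + 1) →₀ ℕ), ‖φ (coeff p.2 (g p.1))‖) ^ D := by
  classical
  set NG := ∑ᶠ p : Fin (n + 1) × (Fin (m + 1) →₀ ℕ), ‖φ (coeff p.2 (g p.1))‖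
    with hNG
  have hNGnn : 0 ≤ NG := finsum_nonneg fun _ => norm_nonneg _
  set T : Finset (Fin (n + 1) × (Fin (m + 1) →₀ ℕ)) :=
    Finset.univ ×ˢ (Finset.univ.biUnion fun j => (g j).support) with hT
  have hNGsum : NG = ∑ p ∈ T, ‖φ (coeff p.2 (g p.1))‖ := by
    apply finsum_eq_finset_sum_of_support_subset
    intro p hp
    simp only [Function.mem_support] at hp
    have hne : coeff p.2 (g p.1) ≠ 0 := fun h0 => hp (by rw [h0, map_zero, norm_zero])
    rw [Finset.mem_coe, hT, Finset.mem_product]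
    exact ⟨Finset.mem_univ _, Finset.mem_biUnion.mpr
      ⟨p.1, Finset.mem_univ _, mem_support_iff.mpr hne⟩⟩
  have hgNG : ∀ i, cnorm1 (MvPolynomial.map φ (g i)) ≤ NG := by
    intro i
    have hsub : (MvPolynomial.map φ (g i)).support ⊆
        Finset.univ.biUnion fun j => (g j).support :=
      (MvPolynomial.support_map_subset _ _).trans
        (Finset.subset_biUnion_of_mem (fun j => (g j).support) (Finset.mem_univ i))
    rw [cnorm1_eq_sum_subset hsub, hNGsum, hT, Finset.sum_product]
    have hle := Finset.single_le_sum
      (f := fun j => ∑ μ ∈ Finset.univ.biUnion fun j => (g j).support,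
        ‖φ (coeff μ (g j))‖)
      (fun j _ => Finset.sum_nonneg fun _ _ => norm_nonneg _) (Finset.mem_univ i)
    refine le_trans (le_of_eq ?_) hle
    exact Finset.sum_congr rfl fun μ _ => by rw [coeff_map]
  have hNf : (∑ᶠ d, ‖φ (coeff d f)‖) =
      ∑ d ∈ f.support, ‖φ (coeff d f)‖ := by
    apply finsum_eq_finset_sum_of_support_subset
    intro d hd
    simp only [Function.mem_support] at hd
    rw [Finset.mem_coe, mem_support_iff]
    intro h0
    exact hd (by rw [h0, map_zero, norm_zero])
  rw [finsum_abs_eq_cnorm1, hNf]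
  have hmap : MvPolynomial.map φ (MvPolynomial.aeval g f) =
      ∑ d ∈ f.support, MvPolynomial.C (φ (coeff d f)) *
        ∏ i : Fin (n + 1), (MvPolynomial.map φ (g i)) ^ d i := by
    rw [_root_.aeval_expand, map_sum]
    refine Finset.sum_congr rfl fun d _ => ?_
    rw [map_mul, MvPolynomial.map_C]
    congr 1
    rw [map_prod]
    exact Finset.prod_congr rfl fun i _ => by rw [map_pow]
  rw [hmap, Finset.sum_mul]
  refine le_trans (cnorm1_sum_le _ _) (Finset.sum_le_sum fun d hd => ?_)
  refine le_trans (cnorm1_mul_le _ _) ?_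
  refine mul_le_mul (cnorm1_C_le _) ?_ (cnorm1_nonneg _) (norm_nonneg _)
  refine le_trans (cnorm1_prod_le _ _) ?_
  refine le_trans (Finset.prod_le_prod (fun i _ => cnorm1_nonneg _)
    (fun i _ => le_trans (cnorm1_pow_le _ _)
      (pow_le_pow_left₀ (cnorm1_nonneg _) (hgNG i) _))) ?_
  rw [Finset.prod_pow_eq_pow_sum, degree_univ_eq hf (mem_support_iff.mp hd)]

lemma nonarch_bound {n m D : ℕ} (A : AbsoluteValue K ℝ)
    (hna : ∀ x y : K, A (x + y) ≤ max (A x) (A y))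
    (f : MvPolynomial (Fin (n + 1)) K) (hf : f.IsHomogeneous D)
    (g : Fin (n + 1) → MvPolynomial (Fin (m + 1)) K) :
    (⨆ μ, A (coeff μ (MvPolynomial.aeval g f))) ≤
      (⨆ d, A (coeff d f)) *
        (⨆ p : Fin (n + 1) × (Fin (m + 1) →₀ ℕ), A (coeff p.2 (g p.1))) ^ D := by
  classical
  set Gv := ⨆ p : Fin (n + 1) × (Fin (m + 1) →₀ ℕ), A (coeff p.2 (g p.1)) with hGv
  have hGnn : 0 ≤ Gv := Real.iSup_nonneg fun _ => A.nonneg _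
  have hbddpair : BddAbove (Set.range fun p : Fin (n + 1) × (Fin (m + 1) →₀ ℕ) =>
      A (coeff p.2 (g p.1))) := by
    apply bddAbove_range_of_finite_support
    apply (Finset.finite_toSet ((Finset.univ : Finset (Fin (n + 1))) ×ˢ
      (Finset.univ.biUnion fun j => (g j).support))).subset
    intro p hp
    simp only [Function.mem_support] at hp
    have hne : coeff p.2 (g p.1) ≠ 0 := fun h0 => hp (by rw [h0, map_zero])
    rw [Finset.mem_coe, Finset.mem_product]
    exact ⟨Finset.mem_univ _, Finset.mem_biUnion.mpr
      ⟨p.1, Finset.mem_univ _, mem_support_iff.mpr hne⟩⟩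
  have hgG : ∀ i, gaussSup A (g i) ≤ Gv := fun i =>
    gaussSup_le A hGnn fun μ => le_ciSup hbddpair (i, μ)
  show gaussSup A (MvPolynomial.aeval g f) ≤ gaussSup A f * Gv ^ D
  refine gaussSup_le A (mul_nonneg (gaussSup_nonneg A f) (pow_nonneg hGnn D)) fun μ => ?_
  rw [_root_.aeval_expand, coeff_sum]
  refine absval_sum_le A hna _ _
    (mul_nonneg (gaussSup_nonneg A f) (pow_nonneg hGnn D)) fun d hd => ?_
  rw [coeff_C_mul, map_mul]
  refine mul_le_mul (le_gaussSup A f d) ?_ (A.nonneg _) (gaussSup_nonneg A f)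
  refine le_trans (le_gaussSup A _ μ) ?_
  refine le_trans (gaussSup_prod_le A hna _ _) ?_
  refine le_trans (Finset.prod_le_prod (fun i _ => gaussSup_nonneg A _)
    (fun i _ => le_trans (gaussSup_pow_le A hna _ _)
      (pow_le_pow_left₀ (gaussSup_nonneg A _) (hgG i) _))) ?_
  rw [Finset.prod_pow_eq_pow_sum, degree_univ_eq hf (mem_support_iff.mp hd)]

lemma local_bound (P : AbsValueFamily K) {n m D : ℕ} (f : MvPolynomial (Fin (n + 1)) K)
    (hf : f.IsHomogeneous D) (g : Fin (n + 1) → MvPolynomial (Fin (m + 1)) K) (v : P.V) :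
    P.norm1 (fun μ : Fin (m + 1) →₀ ℕ => coeff μ (MvPolynomial.aeval g f)) v ≤
      P.norm1 (fun d : Fin (n + 1) →₀ ℕ => coeff d f) v *
        (P.norm1 (fun p : Fin (n + 1) × (Fin (m + 1) →₀ ℕ) => coeff p.2 (g p.1)) v) ^ D := by
  rw [AbsValueFamily.norm1, AbsValueFamily.norm1, AbsValueFamily.norm1]
  split_ifs with h
  · show (∑ᶠ μ, ‖P.emb v h (coeff μ (MvPolynomial.aeval g f))‖) ^ P.w v ≤
      (∑ᶠ d, ‖P.emb v h (coeff d f)‖) ^ P.w v *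
        ((∑ᶠ p : Fin (n + 1) × (Fin (m + 1) →₀ ℕ),
          ‖P.emb v h (coeff p.2 (g p.1))‖) ^ P.w v) ^ D
    set x := ∑ᶠ μ, ‖P.emb v h (coeff μ (MvPolynomial.aeval g f))‖ with hx
    set y := ∑ᶠ d, ‖P.emb v h (coeff d f)‖ with hy
    set z := ∑ᶠ p : Fin (n + 1) × (Fin (m + 1) →₀ ℕ),
      ‖P.emb v h (coeff p.2 (g p.1))‖ with hz
    have hynn : 0 ≤ y := finsum_nonneg fun _ => norm_nonneg _
    have hznn : 0 ≤ z := finsum_nonneg fun _ => norm_nonneg _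
    have hw : 0 ≤ P.w v := le_of_lt (P.wpos v h)
    have hb : x ≤ y * z ^ D := arch_bound (P.emb v h) f hf g
    calc x ^ P.w v ≤ (y * z ^ D) ^ P.w v :=
          Real.rpow_le_rpow (finsum_nonneg fun _ => norm_nonneg _) hb hw
      _ = y ^ P.w v * (z ^ D) ^ P.w v := Real.mul_rpow hynn (pow_nonneg hznn D)
      _ = y ^ P.w v * (z ^ P.w v) ^ D := by
          have hzz : (z ^ D) ^ P.w v = (z ^ P.w v) ^ D := by
            rw [← Real.rpow_natCast z D, ← Real.rpow_natCast (z ^ P.w v) D,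
              ← Real.rpow_mul hznn, ← Real.rpow_mul hznn, mul_comm (↑D : ℝ) (P.w v)]
          rw [hzz]
  · exact nonarch_bound (P.A v) (P.nonarch v h) f hf g

end PerPlace

open MvPolynomial Function in
/-- For `f` homogeneous of degree `D` and `g_0, …, g_n` homogeneous of equal degree `e`,
the composite satisfies `h₁(f(g_0,…,g_n)) ≤ h₁(f) + D·h₁(g_0,…,g_n)`. -/
theorem height1_of_composition_le (P : AbsValueFamily K) (n m D e : ℕ)
    (f : MvPolynomial (Fin (n + 1)) K) (hf : f.IsHomogeneous D)
    (g : Fin (n + 1) → MvPolynomial (Fin (m + 1)) K)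
    (hg : ∀ i, (g i).IsHomogeneous e) :
    P.hgt1 (fun μ : Fin (m + 1) →₀ ℕ => MvPolynomial.coeff μ (MvPolynomial.aeval g f)) ≤
      P.hgt1 (fun μ : Fin (n + 1) →₀ ℕ => MvPolynomial.coeff μ f) +
        D * P.hgt1 (fun p : Fin (n + 1) × (Fin (m + 1) →₀ ℕ) =>
          MvPolynomial.coeff p.2 (g p.1)) := by
  classical
  -- finiteness of the supports of the three coefficient families
  have hsF : (support fun μ : Fin (m + 1) →₀ ℕ => coeff μ (aeval g f)).Finite :=
    (aeval g f).support.finite_toSet.subset fun μ hμ =>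
      Finset.mem_coe.mpr (mem_support_iff.mpr hμ)
  have hsf : (support fun d : Fin (n + 1) →₀ ℕ => coeff d f).Finite :=
    f.support.finite_toSet.subset fun d hd => Finset.mem_coe.mpr (mem_support_iff.mpr hd)
  have hsg : (support fun p : Fin (n + 1) × (Fin (m + 1) →₀ ℕ) =>
      coeff p.2 (g p.1)).Finite := by
    apply (Finset.finite_toSet ((Finset.univ : Finset (Fin (n + 1))) ×ˢ
      (Finset.univ.biUnion fun j => (g j).support))).subset
    intro p hp
    rw [Finset.mem_coe, Finset.mem_product]
    exact ⟨Finset.mem_univ _, Finset.mem_biUnion.mpr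
      ⟨p.1, Finset.mem_univ _, mem_support_iff.mpr hp⟩⟩
  by_cases hF : ∀ μ : Fin (m + 1) →₀ ℕ, coeff μ (aeval g f) = 0
  · rw [P.hgt1_of_zero _ hF]
    exact add_nonneg (P.hgt1_nonneg _ hsf)
      (mul_nonneg (Nat.cast_nonneg D) (P.hgt1_nonneg _ hsg))
  · push_neg at hF
    obtain ⟨μ₀, hμ₀⟩ := hF
    have hfne : ∃ d, coeff d f ≠ 0 := by
      by_contra hc
      push_neg at hc
      have hf0 : f = 0 := MvPolynomial.ext _ _ fun d => by rw [hc d, coeff_zero]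
      exact hμ₀ (by rw [hf0, map_zero, coeff_zero])
    obtain ⟨d₀, hd₀⟩ := hfne
    have hPF : (mulSupport fun v =>
        P.norm1 (fun μ : Fin (m + 1) →₀ ℕ => coeff μ (aeval g f)) v).Finite :=
      P.mulSupport_norm1_finite _ hsF μ₀ hμ₀
    have hPf : (mulSupport fun v =>
        P.norm1 (fun d : Fin (n + 1) →₀ ℕ => coeff d f) v).Finite :=
      P.mulSupport_norm1_finite _ hsf d₀ hd₀
    have hPFpos : 0 < ∏ᶠ v, P.norm1 (fun μ : Fin (m + 1) →₀ ℕ => coeff μ (aeval g f)) v :=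
      lt_of_lt_of_le one_pos (P.one_le_finprod_norm1 _ hsF μ₀ hμ₀)
    have hPfpos : 0 < ∏ᶠ v, P.norm1 (fun d : Fin (n + 1) →₀ ℕ => coeff d f) v :=
      lt_of_lt_of_le one_pos (P.one_le_finprod_norm1 _ hsf d₀ hd₀)
    by_cases hD : D = 0
    · subst hD
      have hloc : ∀ v, P.norm1 (fun μ : Fin (m + 1) →₀ ℕ => coeff μ (aeval g f)) v ≤
          P.norm1 (fun d : Fin (n + 1) →₀ ℕ => coeff d f) v := by
        intro v
        have h := local_bound P f hf g v
        rwa [pow_zero, mul_one] at h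
      have hle := finprod_le_finprod_of_le (fun v => P.norm1_nonneg _ v) hloc hPF hPf
      have hgoal : P.hgt1 (fun μ : Fin (m + 1) →₀ ℕ => coeff μ (aeval g f)) ≤
          P.hgt1 (fun d : Fin (n + 1) →₀ ℕ => coeff d f) := Real.log_le_log hPFpos hle
      calc P.hgt1 (fun μ : Fin (m + 1) →₀ ℕ => coeff μ (aeval g f)) ≤
          P.hgt1 (fun d : Fin (n + 1) →₀ ℕ => coeff d f) := hgoal
        _ ≤ _ := by simp
    · -- D ≠ 0 : the family g must have some nonzero coefficient
      have hgne : ∃ p : Fin (n + 1) × (Fin (m + 1) →₀ ℕ), coeff p.2 (g p.1) ≠ 0 := by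
        by_contra hc
        push_neg at hc
        have hgg : g = (0 : Fin (n + 1) → MvPolynomial (Fin (m + 1)) K) :=
          funext fun i => MvPolynomial.ext _ _ fun μ => by rw [hc (i, μ)]; simp
        have h00 : coeff (0 : Fin (n + 1) →₀ ℕ) f = 0 := by
          by_contra h0
          apply hD
          rw [← degree_univ_eq hf h0]
          simp
        have hz : MvPolynomial.aeval g f = 0 := by
          rw [hgg, MvPolynomial.aeval_zero]
          have hcc : constantCoeff f = 0 := by
            rw [MvPolynomial.constantCoeff_eq]
            exact h00
          rw [hcc, map_zero]
        exact hμ₀ (by rw [hz, coeff_zero])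
      obtain ⟨p₀, hp₀⟩ := hgne
      have hPg : (mulSupport fun v =>
          P.norm1 (fun p : Fin (n + 1) × (Fin (m + 1) →₀ ℕ) => coeff p.2 (g p.1)) v).Finite :=
        P.mulSupport_norm1_finite _ hsg p₀ hp₀
      have hPgpos : 0 < ∏ᶠ v,
          P.norm1 (fun p : Fin (n + 1) × (Fin (m + 1) →₀ ℕ) => coeff p.2 (g p.1)) v :=
        lt_of_lt_of_le one_pos (P.one_le_finprod_norm1 _ hsg p₀ hp₀)
      have hpow : (mulSupport fun v =>
          (P.norm1 (fun p : Fin (n + 1) × (Fin (m + 1) →₀ ℕ) => coeff p.2 (g p.1)) v) ^ D).Finite := by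
        apply hPg.subset
        intro v hv
        rw [Function.mem_mulSupport] at hv ⊢
        intro h1
        exact hv (by rw [h1, one_pow])
      have hmulfin : (mulSupport fun v =>
          P.norm1 (fun d : Fin (n + 1) →₀ ℕ => coeff d f) v *
            (P.norm1 (fun p : Fin (n + 1) × (Fin (m + 1) →₀ ℕ) => coeff p.2 (g p.1)) v) ^ D).Finite := by
        apply (hPf.union hpow).subset
        intro v hv
        rw [Function.mem_mulSupport] at hv
        by_contra hvn
        simp only [Set.mem_union, Function.mem_mulSupport, not_or, not_not] at hvn
        exact hv (by rw [hvn.1, hvn.2, one_mul])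
      have hchain : (∏ᶠ v, P.norm1 (fun μ : Fin (m + 1) →₀ ℕ => coeff μ (aeval g f)) v) ≤
          (∏ᶠ v, P.norm1 (fun d : Fin (n + 1) →₀ ℕ => coeff d f) v) *
            (∏ᶠ v, P.norm1 (fun p : Fin (n + 1) × (Fin (m + 1) →₀ ℕ) => coeff p.2 (g p.1)) v) ^ D := by
        have h1 := finprod_le_finprod_of_le (fun v => P.norm1_nonneg _ v)
          (fun v => local_bound P f hf g v) hPF hmulfin
        rwa [finprod_mul_distrib hPf hpow, ← finprod_pow hPg] at h1
      have hlog := Real.log_le_log hPFpos hchain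
      rw [Real.log_mul (ne_of_gt hPfpos) (ne_of_gt (pow_pos hPgpos D)), Real.log_pow] at hlog
      exact hlog
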